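/- arXiv:2303.08139 — 2 statements merged into one kernel-verified Lean document; each statement's English description precedes it below -/
import Mathlib

section
/- For $\alpha_n \to 0+$, the sum $\sum_{j=1}^\infty \frac{\alpha_n j\, e^{-\alpha_n j}}{1 - e^{-\alpha_n j}}\, \alpha_n$ converges to $\int_0^\infty \frac{s e^{-s}}{1-e^{-s}}\, ds = \pi^2/6$; consequently $\mathsf{E}(N) = \sum_{j=1}^\infty \frac{j e^{-\alpha_n j}}{1 - e^{-\alpha_n j}} \sim \frac{\pi^2}{6\, \alpha_n^2}$. -/
open MeasureTheory Filter Set Real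


lemma geom_aux {x : ℝ} (hx : 0 < x) :
    ∑' k : ℕ, Real.exp (-(x * ((k : ℝ) + 1))) = Real.exp (-x) / (1 - Real.exp (-x)) := by
  have hr1 : Real.exp (-x) < 1 := Real.exp_lt_one_iff.mpr (by linarith)
  have hr0 : 0 ≤ Real.exp (-x) := (Real.exp_pos _).le
  have h1 : ∀ k : ℕ, Real.exp (-(x * ((k : ℝ) + 1))) = Real.exp (-x) ^ k * Real.exp (-x) := by
    intro k
    rw [← Real.exp_nat_mul, ← Real.exp_add]
    congr 1
    push_cast
    ring
  simp_rw [h1]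
  rw [tsum_mul_right, tsum_geometric_of_lt_one hr0 hr1]
  rw [div_eq_mul_inv, mul_comm]

lemma coe_geom {q : ℝ} (h0 : 0 ≤ q) (h1 : q < 1) :
    ∑' j : ℕ, ((j : ℝ) + 1) * q ^ (j + 1) = q / (1 - q) ^ 2 := by
  have hn : ‖q‖ < 1 := by rwa [Real.norm_eq_abs, abs_of_nonneg h0]
  have hs := hasSum_coe_mul_geometric_of_norm_lt_one (𝕜 := ℝ) hn
  have := hs.tsum_eq
  rw [Summable.tsum_eq_zero_add hs.summable] at this
  rw [eq_comm]
  simpa using this.symm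

lemma key_ineq {s : ℝ} (hs : 0 < s) :
    Real.exp (-s) / (1 - Real.exp (-s)) ^ 2 ≤ 1 / s ^ 2 := by
  have hsinh : s / 2 ≤ Real.sinh (s / 2) := Real.self_le_sinh_iff.mpr (by linarith)
  have hkey : s * Real.exp (-(s/2)) ≤ 1 - Real.exp (-s) := by
    have h2 : 2 * Real.sinh (s/2) = Real.exp (s/2) - Real.exp (-(s/2)) := by
      rw [Real.sinh_eq]; ring
    have h3 : s ≤ Real.exp (s/2) - Real.exp (-(s/2)) := by
      rw [← h2]; linarith
    have h4 := mul_le_mul_of_nonneg_right h3 (Real.exp_pos (-(s/2))).le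
    calc s * Real.exp (-(s/2)) ≤ (Real.exp (s/2) - Real.exp (-(s/2))) * Real.exp (-(s/2)) := h4
      _ = 1 - Real.exp (-s) := by
          rw [sub_mul, ← Real.exp_add, ← Real.exp_add]
          norm_num
          rw [show -(s/2) + -(s/2) = -s by ring]
  have hpos : (0:ℝ) < 1 - Real.exp (-s) :=
    sub_pos.mpr (Real.exp_lt_one_iff.mpr (by linarith))
  have hsq : s ^ 2 * Real.exp (-s) ≤ (1 - Real.exp (-s)) ^ 2 := by
    have := mul_le_mul hkey hkey (by positivity) hpos.le
    have hx : Real.exp (-(s/2)) * Real.exp (-(s/2)) = Real.exp (-s) := by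
      rw [← Real.exp_add]; congr 1; ring
    calc s ^ 2 * Real.exp (-s) = (s * Real.exp (-(s/2))) * (s * Real.exp (-(s/2))) := by
          rw [← hx]; ring
      _ ≤ (1 - Real.exp (-s)) * (1 - Real.exp (-s)) := this
      _ = (1 - Real.exp (-s)) ^ 2 := by ring
  rw [div_le_div_iff₀ (by positivity) (by positivity)]
  calc Real.exp (-s) * s ^ 2 = s ^ 2 * Real.exp (-s) := by ring
    _ ≤ (1 - Real.exp (-s)) ^ 2 := hsq
    _ = 1 * (1 - Real.exp (-s)) ^ 2 := (one_mul _).symm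

lemma exp_pow_aux (y : ℝ) (m : ℕ) :
    Real.exp (-(y * ((m : ℝ) + 1))) = Real.exp (-y) ^ (m + 1) := by
  rw [← Real.exp_nat_mul]
  congr 1
  push_cast
  ring

lemma swap_sum {a : ℝ} (ha : 0 < a) :
    ∑' j : ℕ, a ^ 2 * (((j : ℝ) + 1) * Real.exp (-(a * ((j : ℝ) + 1)))
        / (1 - Real.exp (-(a * ((j : ℝ) + 1))))) =
    ∑' k : ℕ, a ^ 2 * Real.exp (-(a * ((k : ℝ) + 1)))
        / (1 - Real.exp (-(a * ((k : ℝ) + 1)))) ^ 2 := by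
  set F : ℕ → ℕ → ℝ := fun j k =>
    a ^ 2 * ((j : ℝ) + 1) * Real.exp (-((a * ((j : ℝ) + 1)) * ((k : ℝ) + 1))) with hF
  have hexp_pos : ∀ j : ℕ, (0:ℝ) < a * ((j : ℝ) + 1) := fun j => by positivity
  have hlt1 : ∀ j : ℕ, Real.exp (-(a * ((j : ℝ) + 1))) < 1 :=
    fun j => Real.exp_lt_one_iff.mpr (by linarith [hexp_pos j])
  -- row sums
  have hrow : ∀ j : ℕ, ∑' k : ℕ, F j k =
      a ^ 2 * (((j : ℝ) + 1) * Real.exp (-(a * ((j : ℝ) + 1)))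
        / (1 - Real.exp (-(a * ((j : ℝ) + 1))))) := by
    intro j
    rw [hF]
    simp only []
    rw [tsum_mul_left, geom_aux (hexp_pos j)]
    ring
  -- rows summable (geometric)
  have hrowsummable : ∀ j : ℕ, Summable (fun k => F j k) := by
    intro j
    apply Summable.mul_left
    have : Summable (fun k : ℕ => Real.exp (-(a * ((j : ℝ) + 1))) ^ k *
        Real.exp (-(a * ((j : ℝ) + 1)))) :=
      (summable_geometric_of_lt_one (Real.exp_pos _).le (hlt1 j)).mul_right _
    apply this.congr
    intro k
    rw [← pow_succ, ← exp_pow_aux]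
  -- column sums
  have hcolhs : ∀ k : ℕ, ∑' j : ℕ, F j k =
      a ^ 2 * Real.exp (-(a * ((k : ℝ) + 1)))
        / (1 - Real.exp (-(a * ((k : ℝ) + 1)))) ^ 2 := by
    intro k
    set q := Real.exp (-(a * ((k : ℝ) + 1))) with hq
    have h0 : 0 ≤ q := (Real.exp_pos _).le
    have h1 : q < 1 := hlt1 k
    have hFk : ∀ j : ℕ, F j k = a ^ 2 * (((j : ℝ) + 1) * q ^ (j + 1)) := by
      intro j
      rw [hF, hq]
      simp only []
      rw [← exp_pow_aux]
      rw [show (a * ((k : ℝ) + 1)) * ((j:ℝ) + 1) = (a * ((j : ℝ) + 1)) * ((k:ℝ) + 1) by ring]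
      ring
    simp_rw [hFk]
    rw [tsum_mul_left, coe_geom h0 h1]
    ring
  have hcolsummable : ∀ k : ℕ, Summable (fun j => F j k) := by
    intro k
    set q := Real.exp (-(a * ((k : ℝ) + 1))) with hq
    have h1 : q < 1 := hlt1 k
    have hn : ‖q‖ < 1 := by rwa [Real.norm_eq_abs, abs_of_nonneg (Real.exp_pos _).le]
    have hs := (hasSum_coe_mul_geometric_of_norm_lt_one (𝕜 := ℝ) hn).summable
    have hs2 : Summable (fun j : ℕ => ((j:ℝ)+1) * q ^ (j+1)) := by
      have := (summable_nat_add_iff 1).mpr hs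
      apply this.congr
      intro j; push_cast; ring
    have := hs2.mul_left (a ^ 2)
    apply this.congr
    intro j
    rw [hF]
    simp only []
    rw [← exp_pow_aux]
    rw [show (a * ((k : ℝ) + 1)) * ((j:ℝ) + 1) = (a * ((j : ℝ) + 1)) * ((k:ℝ) + 1) by ring]
    ring
  -- summability over the product
  have hFnonneg : ∀ p : ℕ × ℕ, 0 ≤ Function.uncurry F p := by
    intro ⟨j, k⟩
    simp only [Function.uncurry, hF]
    positivity
  have hS : Summable (fun j : ℕ => ∑' k, F j k) := by
    simp_rw [hrow]
    apply Summable.mul_left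
    -- bound by geometric
    have hr : Real.exp (-a) < 1 := Real.exp_lt_one_iff.mpr (by linarith)
    have hb : Summable (fun j : ℕ => ((j:ℝ)+1) * Real.exp (-a) ^ (j+1) / (1 - Real.exp (-a))) := by
      apply Summable.div_const
      have hn : ‖Real.exp (-a)‖ < 1 := by
        rwa [Real.norm_eq_abs, abs_of_nonneg (Real.exp_pos _).le]
      have hs := (hasSum_coe_mul_geometric_of_norm_lt_one (𝕜 := ℝ) hn).summable
      have := (summable_nat_add_iff 1).mpr hs
      apply this.congr
      intro j; push_cast; ring
    apply Summable.of_nonneg_of_le _ _ hb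
    · intro j
      have h1 := hlt1 j
      have h2 : (0:ℝ) < 1 - Real.exp (-(a * ((j:ℝ)+1))) := by linarith
      exact div_nonneg (by positivity) h2.le
    · intro j
      have hle : Real.exp (-(a * ((j:ℝ)+1))) ≤ Real.exp (-a) := by
        apply Real.exp_le_exp.mpr
        nlinarith [hexp_pos j, (Nat.cast_nonneg j : (0:ℝ) ≤ j), ha]
      have hd : 1 - Real.exp (-a) ≤ 1 - Real.exp (-(a * ((j:ℝ)+1))) := by linarith
      have hd0 : (0:ℝ) < 1 - Real.exp (-a) := by linarith
      rw [exp_pow_aux] at *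
      apply div_le_div₀ (by positivity) _ hd0 hd
      apply mul_le_mul_of_nonneg_left _ (by positivity)
      exact le_rfl
  have huncurry : Summable (Function.uncurry F) := by
    rw [summable_prod_of_nonneg hFnonneg]
    exact ⟨fun j => hrowsummable j, hS⟩
  calc ∑' j : ℕ, a ^ 2 * (((j : ℝ) + 1) * Real.exp (-(a * ((j : ℝ) + 1)))
        / (1 - Real.exp (-(a * ((j : ℝ) + 1))))) = ∑' (j) (k), F j k := by
        exact tsum_congr fun j => (hrow j).symm
    _ = ∑' (k) (j), F j k := (Summable.tsum_comm huncurry).symm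
    _ = _ := tsum_congr fun k => hcolhs k

lemma basel_shift : HasSum (fun k : ℕ => 1 / ((k : ℝ) + 1) ^ 2) (π ^ 2 / 6) := by
  have h := hasSum_zeta_two
  have h2 : HasSum (fun n : ℕ => (1:ℝ) / ((n + 1 : ℕ) : ℝ) ^ 2) (π ^ 2 / 6 - ∑ i ∈ Finset.range 1, (1:ℝ) / (i:ℝ) ^ 2) :=
    (hasSum_nat_add_iff' (f := fun n : ℕ => (1:ℝ) / (n:ℝ) ^ 2) 1).mpr (by simpa using h)
  simp only [Finset.range_one, Finset.sum_singleton, Nat.cast_zero] at h2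
  norm_num at h2
  exact h2.congr_fun fun k => by push_cast; ring_nf
 
lemma ratio_tendsto : Tendsto (fun s : ℝ => s / (1 - Real.exp (-s))) (nhdsWithin 0 {0}ᶜ) (nhds 1) := by
  have hd : HasDerivAt (fun s : ℝ => 1 - Real.exp (-s)) 1 0 := by
    have h1 : HasDerivAt (fun s : ℝ => Real.exp (-s)) (-1) 0 := by
      have := (Real.hasDerivAt_exp (-0 : ℝ)).comp (0:ℝ) (hasDerivAt_neg (0:ℝ))
      simpa [Function.comp_def] using this
    simpa using h1.const_sub (1:ℝ)
  have := hasDerivAt_iff_tendsto_slope.mp hd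
  have h2 : Tendsto (fun s : ℝ => (1 - Real.exp (-s)) / s) (nhdsWithin 0 {0}ᶜ) (nhds 1) := by
    apply this.congr'
    filter_upwards [self_mem_nhdsWithin] with s hs
    simp only [slope, sub_zero, vsub_eq_sub, Real.exp_zero]
    rw [div_eq_inv_mul]
    norm_num
  have h3 := h2.inv₀ one_ne_zero
  rw [inv_one] at h3
  apply h3.congr
  intro s
  rw [inv_div]

lemma g_tendsto (α : ℕ → ℝ) (hpos : ∀ n, 0 < α n) (hα : Tendsto α atTop (nhds 0)) :
    Tendsto (fun n => ∑' k : ℕ, (α n) ^ 2 * Real.exp (-(α n * ((k : ℝ) + 1)))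
        / (1 - Real.exp (-(α n * ((k : ℝ) + 1)))) ^ 2) atTop (nhds (π ^ 2 / 6)) := by
  rw [← basel_shift.tsum_eq]
  apply tendsto_tsum_of_dominated_convergence (bound := fun k : ℕ => 1 / ((k : ℝ) + 1) ^ 2)
    basel_shift.summable
  · -- pointwise limit
    intro k
    have hk1 : (0:ℝ) < (k : ℝ) + 1 := by positivity
    -- φ := fun s => (s / (1 - exp (-s)))^2 * exp (-s), tendsto 1 along 𝓝[≠]0
    have hφ : Tendsto (fun s : ℝ => (s / (1 - Real.exp (-s))) ^ 2 * Real.exp (-s))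
        (nhdsWithin 0 {0}ᶜ) (nhds 1) := by
      have h1 := (ratio_tendsto.pow 2).mul
        (((Real.continuous_exp.comp continuous_neg).tendsto 0).mono_left nhdsWithin_le_nhds)
      simpa using h1
    have harg : Tendsto (fun n => α n * ((k : ℝ) + 1)) atTop (nhdsWithin 0 {0}ᶜ) := by
      apply tendsto_nhdsWithin_of_tendsto_nhds_of_eventually_within
      · simpa using hα.mul_const ((k : ℝ) + 1)
      · filter_upwards with n
        have : 0 < α n * ((k : ℝ) + 1) := mul_pos (hpos n) hk1
        simp [ne_of_gt this]
    have hcomp := (hφ.comp harg).const_mul (1 / ((k : ℝ) + 1) ^ 2)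
    rw [mul_one] at hcomp
    apply hcomp.congr
    intro n
    have hs : 0 < α n * ((k : ℝ) + 1) := mul_pos (hpos n) hk1
    have hden : (0:ℝ) < 1 - Real.exp (-(α n * ((k : ℝ) + 1))) :=
      sub_pos.mpr (Real.exp_lt_one_iff.mpr (by linarith))
    simp only [Function.comp]
    field_simp
  · -- bound
    filter_upwards with n k
    have hk1 : (0:ℝ) < (k : ℝ) + 1 := by positivity
    have hs : 0 < α n * ((k : ℝ) + 1) := mul_pos (hpos n) hk1
    have hden : (0:ℝ) < 1 - Real.exp (-(α n * ((k : ℝ) + 1))) :=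
      sub_pos.mpr (Real.exp_lt_one_iff.mpr (by linarith))
    have hnonneg : 0 ≤ (α n) ^ 2 * Real.exp (-(α n * ((k : ℝ) + 1)))
        / (1 - Real.exp (-(α n * ((k : ℝ) + 1)))) ^ 2 := by positivity
    rw [Real.norm_eq_abs, abs_of_nonneg hnonneg]
    have hki := key_ineq hs
    calc (α n) ^ 2 * Real.exp (-(α n * ((k : ℝ) + 1)))
          / (1 - Real.exp (-(α n * ((k : ℝ) + 1)))) ^ 2
        = (α n) ^ 2 * (Real.exp (-(α n * ((k : ℝ) + 1)))
          / (1 - Real.exp (-(α n * ((k : ℝ) + 1)))) ^ 2) := by ring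
      _ ≤ (α n) ^ 2 * (1 / (α n * ((k : ℝ) + 1)) ^ 2) :=
          mul_le_mul_of_nonneg_left hki (by positivity)
      _ = 1 / ((k : ℝ) + 1) ^ 2 := by
          have := (hpos n).ne'
          field_simp

lemma integral_val (k : ℕ) :
    ∫ s in Ioi (0:ℝ), s * Real.exp (-(((k:ℝ) + 1) * s)) = 1 / ((k:ℝ) + 1) ^ 2 := by
  have hk : (0:ℝ) < (k:ℝ) + 1 := by positivity
  have h := Real.integral_rpow_mul_exp_neg_mul_Ioi (a := 2) (r := (k:ℝ) + 1) two_pos hk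
  rw [Real.Gamma_two, mul_one] at h
  have h2 : ∫ t in Ioi (0:ℝ), t ^ ((2:ℝ) - 1) * Real.exp (-(((k:ℝ) + 1) * t))
      = ∫ s in Ioi (0:ℝ), s * Real.exp (-(((k:ℝ) + 1) * s)) := by
    apply setIntegral_congr_fun measurableSet_Ioi
    intro t ht
    norm_num
  rw [h2] at h
  rw [h]
  rw [show ((2:ℝ)) = ((2:ℕ):ℝ) by norm_num, Real.rpow_natCast]
  rw [div_pow, one_pow]

lemma integrable_val (k : ℕ) :
    IntegrableOn (fun s : ℝ => s * Real.exp (-(((k:ℝ) + 1) * s))) (Ioi 0) := by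
  have hk : (0:ℝ) < (k:ℝ) + 1 := by positivity
  have h := integrableOn_rpow_mul_exp_neg_mul_rpow (p := 1) (s := 1) (b := (k:ℝ) + 1)
    (by norm_num) one_pos hk
  apply h.congr_fun _ measurableSet_Ioi
  intro t ht
  show t ^ (1:ℝ) * Real.exp (-((k:ℝ) + 1) * t ^ (1:ℝ)) = t * Real.exp (-(((k:ℝ) + 1) * t))
  rw [Real.rpow_one, neg_mul]

lemma integral_pi : (∫ s in Ioi (0:ℝ), s * Real.exp (-s) / (1 - Real.exp (-s))) = π ^ 2 / 6 := by
  set F : ℕ → ℝ → ℝ := fun k s => s * Real.exp (-(((k:ℝ) + 1) * s)) with hF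
  have hint : ∀ k : ℕ, Integrable (F k) (volume.restrict (Ioi 0)) := fun k => integrable_val k
  have hnormval : ∀ k : ℕ, (∫ s in Ioi (0:ℝ), ‖F k s‖) = 1 / ((k:ℝ) + 1) ^ 2 := by
    intro k
    rw [← integral_val k]
    apply setIntegral_congr_fun measurableSet_Ioi
    intro s hs
    have : 0 ≤ F k s := mul_nonneg (le_of_lt hs) (Real.exp_pos _).le
    show ‖F k s‖ = s * Real.exp (-(((k:ℝ) + 1) * s))
    rw [Real.norm_eq_abs, abs_of_nonneg this]
  have hsum : Summable (fun k : ℕ => ∫ s in Ioi (0:ℝ), ‖F k s‖) := by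
    simp_rw [hnormval]
    exact basel_shift.summable
  have hswap := MeasureTheory.integral_tsum_of_summable_integral_norm hint hsum
  have hlhs : ∑' k : ℕ, (∫ s in Ioi (0:ℝ), F k s) = π ^ 2 / 6 := by
    have : ∀ k : ℕ, (∫ s in Ioi (0:ℝ), F k s) = 1 / ((k:ℝ) + 1) ^ 2 := fun k => integral_val k
    simp_rw [this]
    exact basel_shift.tsum_eq
  rw [hswap] at hlhs
  rw [← hlhs]
  apply setIntegral_congr_fun measurableSet_Ioi
  intro s hs
  have hs' : (0:ℝ) < s := hs
  have := geom_aux hs'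
  have hFs : ∀ k : ℕ, F k s = s * Real.exp (-(s * ((k:ℝ) + 1))) := by
    intro k
    show s * Real.exp (-(((k:ℝ) + 1) * s)) = s * Real.exp (-(s * ((k:ℝ) + 1)))
    ring_nf
  show s * Real.exp (-s) / (1 - Real.exp (-s)) = ∑' k : ℕ, F k s
  refine Eq.symm ?_
  calc ∑' k : ℕ, F k s = ∑' k : ℕ, s * Real.exp (-(s * ((k:ℝ) + 1))) := tsum_congr hFs
    _ = s * (Real.exp (-s) / (1 - Real.exp (-s))) := by rw [tsum_mul_left, this]
    _ = s * Real.exp (-s) / (1 - Real.exp (-s)) := by ring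

/-- For `α_n → 0+`, the Riemann sum
`∑_j α_n j e^{-α_n j}/(1 - e^{-α_n j}) · α_n` converges to
`∫_0^∞ s e^{-s}/(1-e^{-s}) ds = π²/6`; consequently
`E(N) = ∑_j j e^{-α_n j}/(1 - e^{-α_n j}) ~ π²/(6 α_n²)`. -/
theorem expected_partition_size_asymp (α : ℕ → ℝ) (hpos : ∀ n, 0 < α n)
    (hα : Tendsto α atTop (nhds 0)) :
    (∫ s in Ioi (0:ℝ), s * Real.exp (-s) / (1 - Real.exp (-s))) = π ^ 2 / 6 ∧
    Tendsto (fun n => ∑' j : ℕ,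
        α n * ((j : ℝ) + 1) * Real.exp (-(α n * ((j : ℝ) + 1)))
          / (1 - Real.exp (-(α n * ((j : ℝ) + 1)))) * α n)
      atTop (nhds (π ^ 2 / 6)) ∧
    Tendsto (fun n => (∑' j : ℕ,
        ((j : ℝ) + 1) * Real.exp (-(α n * ((j : ℝ) + 1)))
          / (1 - Real.exp (-(α n * ((j : ℝ) + 1)))))
        / (π ^ 2 / (6 * (α n) ^ 2)))
      atTop (nhds 1) := by
  have key : ∀ n : ℕ, (∑' j : ℕ,
      α n * ((j : ℝ) + 1) * Real.exp (-(α n * ((j : ℝ) + 1)))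
        / (1 - Real.exp (-(α n * ((j : ℝ) + 1)))) * α n)
      = ∑' k : ℕ, (α n) ^ 2 * Real.exp (-(α n * ((k : ℝ) + 1)))
        / (1 - Real.exp (-(α n * ((k : ℝ) + 1)))) ^ 2 := by
    intro n
    rw [← swap_sum (hpos n)]
    exact tsum_congr fun j => by ring
  have part2 : Tendsto (fun n => ∑' j : ℕ,
      α n * ((j : ℝ) + 1) * Real.exp (-(α n * ((j : ℝ) + 1)))
        / (1 - Real.exp (-(α n * ((j : ℝ) + 1)))) * α n)
      atTop (nhds (π ^ 2 / 6)) := by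
    simp only [key]
    exact g_tendsto α hpos hα
  refine ⟨integral_pi, part2, ?_⟩
  -- part 3
  have hP : ∀ n : ℕ, (∑' j : ℕ,
      α n * ((j : ℝ) + 1) * Real.exp (-(α n * ((j : ℝ) + 1)))
        / (1 - Real.exp (-(α n * ((j : ℝ) + 1)))) * α n)
      = (α n) ^ 2 * ∑' j : ℕ, ((j : ℝ) + 1) * Real.exp (-(α n * ((j : ℝ) + 1)))
        / (1 - Real.exp (-(α n * ((j : ℝ) + 1)))) := by
    intro n
    rw [← tsum_mul_left]
    exact tsum_congr fun j => by ring
  have heq : ∀ n : ℕ, (∑' j : ℕ,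
      ((j : ℝ) + 1) * Real.exp (-(α n * ((j : ℝ) + 1)))
        / (1 - Real.exp (-(α n * ((j : ℝ) + 1)))))
      / (π ^ 2 / (6 * (α n) ^ 2))
      = (∑' j : ℕ, α n * ((j : ℝ) + 1) * Real.exp (-(α n * ((j : ℝ) + 1)))
          / (1 - Real.exp (-(α n * ((j : ℝ) + 1)))) * α n) * (6 / π ^ 2) := by
    intro n
    rw [hP n]
    set T := ∑' j : ℕ, ((j : ℝ) + 1) * Real.exp (-(α n * ((j : ℝ) + 1)))
        / (1 - Real.exp (-(α n * ((j : ℝ) + 1))))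
    have ha : α n ≠ 0 := (hpos n).ne'
    have hπ : (π : ℝ) ≠ 0 := Real.pi_ne_zero
    field_simp
  have h3 := part2.mul_const (6 / π ^ 2)
  have hone : (π ^ 2 / 6) * (6 / π ^ 2) = 1 := by
    field_simp
  rw [hone] at h3
  apply h3.congr
  intro n
  exact (heq n).symm
end

section
/- For independent random variables with geometric multiplicities $M_j \sim \mathrm{Geom}(1-z^j)$ with $z = e^{-\alpha}$, $\alpha \to 0+$, the expected number of parts satisfies $\mathsf{E}(M) = \sum_{j=1}^\infty \frac{e^{-\alpha j}}{1 - e^{-\alpha j}} \sim \alpha^{-1}(-\log \alpha)$ as $\alpha \to 0+$. -/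
open MeasureTheory Filter Set Real

private lemma enop_telescope {z : ℝ} (hz0 : 0 < z) (hz1 : z < 1) :
    HasSum (fun j : ℕ => Real.log (1 - z ^ (j + 2)) - Real.log (1 - z ^ (j + 1)))
      (-Real.log (1 - z)) := by
  have hpow : ∀ n : ℕ, z ^ (n + 1) < 1 := fun n =>
    pow_lt_one₀ hz0.le hz1 (by omega : n + 1 ≠ 0)
  have hpos : ∀ n : ℕ, 0 < 1 - z ^ (n + 1) := fun n => by linarith [hpow n]
  have hnonneg : ∀ j : ℕ, 0 ≤ Real.log (1 - z ^ (j + 2)) - Real.log (1 - z ^ (j + 1)) := by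
    intro j
    have h1 : z ^ (j + 2) ≤ z ^ (j + 1) :=
      pow_le_pow_of_le_one hz0.le hz1.le (by omega)
    have := Real.log_le_log (hpos j) (by linarith : (1 - z ^ (j + 1)) ≤ 1 - z ^ (j + 2))
    linarith
  rw [hasSum_iff_tendsto_nat_of_nonneg hnonneg]
  have hsum : ∀ n : ℕ,
      ∑ i ∈ Finset.range n, (Real.log (1 - z ^ (i + 2)) - Real.log (1 - z ^ (i + 1)))
        = Real.log (1 - z ^ (n + 1)) - Real.log (1 - z ^ 1) :=
    fun n => Finset.sum_range_sub (fun i => Real.log (1 - z ^ (i + 1))) n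
  simp only [hsum, pow_one]
  have h1 : Tendsto (fun n : ℕ => Real.log (1 - z ^ (n + 1))) atTop (nhds 0) := by
    have hz : Tendsto (fun n : ℕ => z ^ (n + 1)) atTop (nhds 0) :=
      (tendsto_pow_atTop_nhds_zero_of_lt_one hz0.le hz1).comp (tendsto_add_atTop_nat 1)
    have : Tendsto (fun n : ℕ => 1 - z ^ (n + 1)) atTop (nhds 1) := by
      simpa using (tendsto_const_nhds (x := (1:ℝ))).sub hz
    have := (Real.continuousAt_log (by norm_num : (1:ℝ) ≠ 0)).tendsto.comp this
    simpa [Function.comp_def] using this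
  simpa using h1.sub tendsto_const_nhds

private lemma enop_one_sub_le {α : ℝ} (hα : 0 < α) : 1 - Real.exp (-α) ≤ α := by
  have := Real.add_one_le_exp (-α); linarith

private lemma enop_mul_le {α : ℝ} (hα : 0 < α) : α * Real.exp (-α) ≤ 1 - Real.exp (-α) := by
  have h1 := Real.add_one_le_exp α
  have h2 : Real.exp α * Real.exp (-α) = 1 := by rw [← Real.exp_add]; simp
  nlinarith [Real.exp_pos (-α)]

private lemma enop_term_lower {α : ℝ} (hα : 0 < α) (n : ℕ) :
    α⁻¹ * (Real.log (1 - Real.exp (-α) ^ (n + 2)) - Real.log (1 - Real.exp (-α) ^ (n + 1)))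
      ≤ Real.exp (-α) ^ (n + 1) / (1 - Real.exp (-α) ^ (n + 1)) := by
  set z := Real.exp (-α) with hz
  have hz0 : 0 < z := Real.exp_pos _
  have hz1 : z < 1 := Real.exp_lt_one_iff.mpr (by linarith)
  have ha : 0 < 1 - z ^ (n + 1) := by
    have := pow_lt_one₀ hz0.le hz1 (by omega : n + 1 ≠ 0); linarith
  have hb : 0 < 1 - z ^ (n + 2) := by
    have := pow_lt_one₀ hz0.le hz1 (by omega : n + 1 + 1 ≠ 0); linarith
  have hba : (1 - z ^ (n + 2)) - (1 - z ^ (n + 1)) = z ^ (n + 1) * (1 - z) := by ring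
  have hlog : Real.log (1 - z ^ (n + 2)) - Real.log (1 - z ^ (n + 1))
      ≤ (z ^ (n + 1) * (1 - z)) / (1 - z ^ (n + 1)) := by
    have h := Real.log_le_sub_one_of_pos (div_pos hb ha)
    rw [Real.log_div hb.ne' ha.ne', div_sub_one ha.ne'] at h
    rw [hba] at h; exact h
  have hp : 0 < z ^ (n + 1) := pow_pos hz0 _
  have key : α⁻¹ * ((z ^ (n + 1) * (1 - z)) / (1 - z ^ (n + 1)))
      ≤ z ^ (n + 1) / (1 - z ^ (n + 1)) := by
    rw [mul_div_assoc']
    apply div_le_div_of_nonneg_right ?_ ha.le |>.trans_eq rfl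
    have h1z : 1 - z ≤ α := enop_one_sub_le hα
    calc α⁻¹ * (z ^ (n + 1) * (1 - z)) ≤ α⁻¹ * (z ^ (n + 1) * α) := by
          apply mul_le_mul_of_nonneg_left ?_ (inv_nonneg.mpr hα.le)
          exact mul_le_mul_of_nonneg_left h1z hp.le
      _ = z ^ (n + 1) := by field_simp
  calc α⁻¹ * (Real.log (1 - z ^ (n + 2)) - Real.log (1 - z ^ (n + 1)))
      ≤ α⁻¹ * ((z ^ (n + 1) * (1 - z)) / (1 - z ^ (n + 1))) :=
        mul_le_mul_of_nonneg_left hlog (inv_nonneg.mpr hα.le)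
    _ ≤ z ^ (n + 1) / (1 - z ^ (n + 1)) := key

private lemma enop_term_upper {α : ℝ} (hα : 0 < α) (n : ℕ) :
    Real.exp (-α) ^ (n + 2) / (1 - Real.exp (-α) ^ (n + 2))
      ≤ α⁻¹ * (Real.log (1 - Real.exp (-α) ^ (n + 2)) - Real.log (1 - Real.exp (-α) ^ (n + 1))) := by
  set z := Real.exp (-α) with hz
  have hz0 : 0 < z := Real.exp_pos _
  have hz1 : z < 1 := Real.exp_lt_one_iff.mpr (by linarith)
  have ha : 0 < 1 - z ^ (n + 1) := by
    have := pow_lt_one₀ hz0.le hz1 (by omega : n + 1 ≠ 0); linarith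
  have hb : 0 < 1 - z ^ (n + 2) := by
    have := pow_lt_one₀ hz0.le hz1 (by omega : n + 1 + 1 ≠ 0); linarith
  have hlog : (z ^ (n + 1) * (1 - z)) / (1 - z ^ (n + 2))
      ≤ Real.log (1 - z ^ (n + 2)) - Real.log (1 - z ^ (n + 1)) := by
    have h := Real.log_le_sub_one_of_pos (div_pos ha hb)
    rw [Real.log_div ha.ne' hb.ne', div_sub_one hb.ne'] at h
    have : ((1 - z ^ (n + 1)) - (1 - z ^ (n + 2))) / (1 - z ^ (n + 2))
        = -((z ^ (n + 1) * (1 - z)) / (1 - z ^ (n + 2))) := by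
      rw [← neg_div]; congr 1; ring
    rw [this] at h; linarith
  have hp : 0 < z ^ (n + 1) := pow_pos hz0 _
  have key : z ^ (n + 2) / (1 - z ^ (n + 2))
      ≤ α⁻¹ * ((z ^ (n + 1) * (1 - z)) / (1 - z ^ (n + 2))) := by
    rw [mul_div_assoc']
    apply div_le_div_of_nonneg_right ?_ hb.le |>.trans_eq rfl
    have hmz : α * z ≤ 1 - z := enop_mul_le hα
    have h1 : z ^ (n + 2) = z ^ (n + 1) * z := by ring
    rw [h1, le_inv_mul_iff₀ hα]
    calc α * (z ^ (n + 1) * z) = z ^ (n + 1) * (α * z) := by ring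
      _ ≤ z ^ (n + 1) * (1 - z) := mul_le_mul_of_nonneg_left hmz hp.le
  calc z ^ (n + 2) / (1 - z ^ (n + 2))
      ≤ α⁻¹ * ((z ^ (n + 1) * (1 - z)) / (1 - z ^ (n + 2))) := key
    _ ≤ α⁻¹ * (Real.log (1 - z ^ (n + 2)) - Real.log (1 - z ^ (n + 1))) :=
        mul_le_mul_of_nonneg_left hlog (inv_nonneg.mpr hα.le)

private lemma enop_summable {z : ℝ} (hz0 : 0 < z) (hz1 : z < 1) :
    Summable (fun j : ℕ => z ^ (j + 1) / (1 - z ^ (j + 1))) := by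
  have h1z : 0 < 1 - z := by linarith
  apply Summable.of_nonneg_of_le
    (fun j => div_nonneg (pow_nonneg hz0.le _) (by
      have := pow_lt_one₀ hz0.le hz1 (by omega : j + 1 ≠ 0); linarith))
    (fun j => ?_) ((summable_geometric_of_lt_one hz0.le hz1).mul_left (z / (1 - z)))
  have hj : 0 < 1 - z ^ (j + 1) := by
    have := pow_lt_one₀ hz0.le hz1 (by omega : j + 1 ≠ 0); linarith
  have hle : 1 - z ≤ 1 - z ^ (j + 1) := by
    have : z ^ (j + 1) ≤ z := by
      simpa using pow_le_pow_of_le_one hz0.le hz1.le (Nat.one_le_iff_ne_zero.mpr (by omega : j + 1 ≠ 0))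
    linarith
  calc z ^ (j + 1) / (1 - z ^ (j + 1)) ≤ z ^ (j + 1) / (1 - z) :=
        div_le_div_of_nonneg_left (pow_nonneg hz0.le _) h1z hle
    _ = z / (1 - z) * z ^ j := by rw [pow_succ]; ring

private lemma enop_sum_bounds {α : ℝ} (hα : 0 < α) :
    α⁻¹ * (-Real.log (1 - Real.exp (-α)))
      ≤ (∑' j : ℕ, Real.exp (-α) ^ (j + 1) / (1 - Real.exp (-α) ^ (j + 1))) ∧
    (∑' j : ℕ, Real.exp (-α) ^ (j + 1) / (1 - Real.exp (-α) ^ (j + 1)))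
      ≤ Real.exp (-α) / (1 - Real.exp (-α)) + α⁻¹ * (-Real.log (1 - Real.exp (-α))) := by
  set z := Real.exp (-α) with hz
  have hz0 : 0 < z := Real.exp_pos _
  have hz1 : z < 1 := Real.exp_lt_one_iff.mpr (by linarith)
  have hsum := enop_summable hz0 hz1
  have ht : HasSum (fun j : ℕ => α⁻¹ * (Real.log (1 - z ^ (j + 2)) - Real.log (1 - z ^ (j + 1))))
      (α⁻¹ * (-Real.log (1 - z))) := (enop_telescope hz0 hz1).mul_left α⁻¹
  constructor
  · rw [← ht.tsum_eq]
    exact Summable.tsum_le_tsum (fun j => enop_term_lower hα j) ht.summable hsum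
  · rw [Summable.tsum_eq_zero_add hsum]
    have h0 : z ^ (0 + 1) / (1 - z ^ (0 + 1)) = z / (1 - z) := by norm_num
    rw [h0]
    gcongr
    rw [← ht.tsum_eq]
    refine Summable.tsum_le_tsum (fun j => ?_) ((summable_nat_add_iff 1).mpr hsum) ht.summable
    have := enop_term_upper hα j
    convert this using 3 <;> omega

private lemma enop_tendsto_q :
    Tendsto (fun α : ℝ => (1 - Real.exp (-α)) / α) (nhdsWithin 0 (Ioi 0)) (nhds 1) := by
  have hd : HasDerivAt (fun x : ℝ => 1 - Real.exp (-x)) 1 0 := by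
    have h1 : HasDerivAt (fun x : ℝ => Real.exp (-x)) (-1) 0 := by
      have := (Real.hasDerivAt_exp (-0 : ℝ)).comp 0 (hasDerivAt_neg' (0 : ℝ))
      simpa [Function.comp_def] using this
    simpa using h1.const_sub 1
  have hs := hasDerivAt_iff_tendsto_slope.mp hd
  have hmono : Tendsto (slope (fun x : ℝ => 1 - Real.exp (-x)) 0)
      (nhdsWithin 0 (Ioi 0)) (nhds 1) :=
    hs.mono_left (nhdsWithin_mono 0 (fun x hx => ne_of_gt hx))
  refine hmono.congr' ?_
  filter_upwards [self_mem_nhdsWithin] with α (hα : α ∈ Ioi 0)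
  simp [slope_fun_def, inv_mul_eq_div]

/-- For geometric multiplicities with `z = e^{-α}`, the expected number of parts satisfies
`E(M) = ∑_{j≥1} e^{-αj}/(1 - e^{-αj}) ~ α⁻¹(-log α)` as `α → 0+`. -/
theorem expected_number_of_parts_asymp :
    Tendsto (fun α : ℝ =>
        (∑' j : ℕ, Real.exp (-(α * ((j : ℝ) + 1))) / (1 - Real.exp (-(α * ((j : ℝ) + 1)))))
          / (α⁻¹ * (-Real.log α)))
      (nhdsWithin 0 (Ioi 0)) (nhds 1) := by
  have hIoo : ∀ᶠ α : ℝ in nhdsWithin 0 (Ioi 0), α ∈ Ioo (0:ℝ) 1 :=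
    Ioo_mem_nhdsGT_of_mem (by norm_num : (0:ℝ) ∈ Ico (0:ℝ) 1)
  -- rewrite the tsum
  have htsum : ∀ α : ℝ,
      (∑' j : ℕ, Real.exp (-(α * ((j : ℝ) + 1))) / (1 - Real.exp (-(α * ((j : ℝ) + 1)))))
        = ∑' j : ℕ, Real.exp (-α) ^ (j + 1) / (1 - Real.exp (-α) ^ (j + 1)) := by
    intro α
    refine tsum_congr fun j => ?_
    have : Real.exp (-(α * ((j : ℝ) + 1))) = Real.exp (-α) ^ (j + 1) := by
      rw [← Real.exp_nat_mul]; congr 1; push_cast; ring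
    rw [this]
  -- auxiliary limits
  have hloginv : Tendsto (fun α : ℝ => (-Real.log α)⁻¹) (nhdsWithin 0 (Ioi 0)) (nhds 0) := by
    have h1 : Tendsto (fun α : ℝ => -Real.log α) (nhdsWithin 0 (Ioi 0)) atTop :=
      tendsto_neg_atBot_atTop.comp Real.tendsto_log_nhdsGT_zero
    exact h1.inv_tendsto_atTop
  have hq := enop_tendsto_q
  have hlogq : Tendsto (fun α : ℝ => Real.log ((1 - Real.exp (-α)) / α))
      (nhdsWithin 0 (Ioi 0)) (nhds 0) := by
    have := (Real.continuousAt_log (by norm_num : (1:ℝ) ≠ 0)).tendsto.comp hq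
    simpa [Function.comp_def] using this
  -- lower ratio tends to 1
  have hL : Tendsto (fun α : ℝ =>
      (α⁻¹ * (-Real.log (1 - Real.exp (-α)))) / (α⁻¹ * (-Real.log α)))
      (nhdsWithin 0 (Ioi 0)) (nhds 1) := by
    have key : Tendsto (fun α : ℝ =>
        1 + Real.log ((1 - Real.exp (-α)) / α) * (-Real.log α)⁻¹ * (-1))
        (nhdsWithin 0 (Ioi 0)) (nhds 1) := by
      have hc : Tendsto (fun _ : ℝ => (-1:ℝ)) (nhdsWithin 0 (Ioi 0)) (nhds (-1)) :=
        tendsto_const_nhds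
      have h2 := ((hlogq.mul hloginv).mul hc).const_add (1:ℝ)
      simpa using h2
    refine key.congr' ?_
    filter_upwards [hIoo] with α hα
    obtain ⟨h0, h1⟩ := hα
    have hz1 : Real.exp (-α) < 1 := Real.exp_lt_one_iff.mpr (by linarith)
    have h1z : 0 < 1 - Real.exp (-α) := by linarith
    have hlogα : Real.log α < 0 := Real.log_neg h0 h1
    have hmul : Real.log (1 - Real.exp (-α)) = Real.log α + Real.log ((1 - Real.exp (-α)) / α) := by
      rw [← Real.log_mul h0.ne' (by positivity)]
      congr 1; field_simp
    rw [mul_div_mul_left _ _ (inv_ne_zero h0.ne'), hmul]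
    have hL0 : Real.log α ≠ 0 := hlogα.ne
    generalize Real.log ((1 - Real.exp (-α)) / α) = Q
    rw [neg_div_neg_eq, add_div, div_self hL0, inv_neg, div_eq_mul_inv]
    ring
  -- the extra upper term tends to 0
  have hE : Tendsto (fun α : ℝ =>
      (Real.exp (-α) / (1 - Real.exp (-α))) / (α⁻¹ * (-Real.log α)))
      (nhdsWithin 0 (Ioi 0)) (nhds 0) := by
    have hz : Tendsto (fun α : ℝ => Real.exp (-α)) (nhdsWithin 0 (Ioi 0)) (nhds 1) := by
      have : Tendsto (fun α : ℝ => Real.exp (-α)) (nhds 0) (nhds 1) := by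
        have := (Real.continuous_exp.comp continuous_neg).tendsto (0:ℝ)
        simpa [Function.comp_def] using this
      exact this.mono_left nhdsWithin_le_nhds
    have hqinv : Tendsto (fun α : ℝ => ((1 - Real.exp (-α)) / α)⁻¹)
        (nhdsWithin 0 (Ioi 0)) (nhds 1) := by
      simpa using hq.inv₀ (by norm_num)
    have key : Tendsto (fun α : ℝ =>
        Real.exp (-α) * ((1 - Real.exp (-α)) / α)⁻¹ * (-Real.log α)⁻¹)
        (nhdsWithin 0 (Ioi 0)) (nhds 0) := by
      have := (hz.mul hqinv).mul hloginv
      simpa using this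
    refine key.congr' ?_
    filter_upwards [hIoo] with α hα
    obtain ⟨h0, h1⟩ := hα
    have hz1 : Real.exp (-α) < 1 := Real.exp_lt_one_iff.mpr (by linarith)
    have h1z : 0 < 1 - Real.exp (-α) := by linarith
    have hlogα : Real.log α < 0 := Real.log_neg h0 h1
    have hL0 : Real.log α ≠ 0 := hlogα.ne
    field_simp
  -- upper ratio tends to 1
  have hU : Tendsto (fun α : ℝ =>
      (Real.exp (-α) / (1 - Real.exp (-α)) + α⁻¹ * (-Real.log (1 - Real.exp (-α))))
        / (α⁻¹ * (-Real.log α)))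
      (nhdsWithin 0 (Ioi 0)) (nhds 1) := by
    have h2 : Tendsto (fun α : ℝ =>
        (Real.exp (-α) / (1 - Real.exp (-α))) / (α⁻¹ * (-Real.log α))
          + (α⁻¹ * (-Real.log (1 - Real.exp (-α)))) / (α⁻¹ * (-Real.log α)))
        (nhdsWithin 0 (Ioi 0)) (nhds 1) := by simpa using hE.add hL
    exact h2.congr fun α => (add_div _ _ _).symm
  -- squeeze
  refine tendsto_of_tendsto_of_tendsto_of_le_of_le' hL hU ?_ ?_
  · filter_upwards [hIoo] with α hα
    obtain ⟨h0, h1⟩ := hα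
    have hlogα : Real.log α < 0 := Real.log_neg h0 h1
    have hD : 0 < α⁻¹ * (-Real.log α) := mul_pos (inv_pos.mpr h0) (neg_pos.mpr hlogα)
    rw [htsum α]
    exact div_le_div_of_nonneg_right (enop_sum_bounds h0).1 hD.le |>.trans_eq rfl
  · filter_upwards [hIoo] with α hα
    obtain ⟨h0, h1⟩ := hα
    have hlogα : Real.log α < 0 := Real.log_neg h0 h1
    have hD : 0 < α⁻¹ * (-Real.log α) := mul_pos (inv_pos.mpr h0) (neg_pos.mpr hlogα)
    rw [htsum α]
    exact div_le_div_of_nonneg_right (enop_sum_bounds h0).2 hD.le |>.trans_eq rfl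
end
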